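/- In the partially linear network model, assume additionally that ε^Y and ε^T are square-integrable (and A.mulVec ∘ ε^T square-integrable). Then the moment condition at the true parameters holds: E[⟨ε^Y, ε^T⟩] = 0 and E[⟨ε^Y, A.mulVec ∘ ε^T⟩] = 0; consequently E[ψ(θ₀, α₀, m₀, ℓ₀)] = (0, 0). -/

import Mathlib

open MeasureTheory ProbabilityTheory
open scoped RealInnerProductSpace ENNReal

/-- The action of the matrix `A` on vectors, `A.mulVec`, viewed as a map of
`EuclideanSpace ℝ (Fin n)` (it is definitionally `A.mulVec`). -/
noncomputable def mulVecE {n : ℕ} (A : Matrix (Fin n) (Fin n) ℝ)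
    (v : EuclideanSpace ℝ (Fin n)) : EuclideanSpace ℝ (Fin n) :=
  WithLp.toLp 2 (A.mulVec v)

/-- `mulVecE A` as a continuous linear map. -/
noncomputable def mulVecCLM {n : ℕ} (A : Matrix (Fin n) (Fin n) ℝ) :
    EuclideanSpace ℝ (Fin n) →L[ℝ] EuclideanSpace ℝ (Fin n) :=
  LinearMap.toContinuousLinearMap
    { toFun := mulVecE A
      map_add' := fun x y => by simp [mulVecE, Matrix.mulVec_add]
      map_smul' := fun c x => by simp [mulVecE, Matrix.mulVec_smul] }

/-- Conditional expectation commutes with continuous linear maps. -/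
theorem condexp_clm_comm {Ω : Type*} {m m0 : MeasurableSpace Ω} (hm : m ≤ m0)
    {P : Measure Ω} [IsFiniteMeasure P]
    {E F : Type*} [NormedAddCommGroup E] [NormedSpace ℝ E] [CompleteSpace E]
    [NormedAddCommGroup F] [NormedSpace ℝ F] [CompleteSpace F]
    (L : E →L[ℝ] F) {f : Ω → E} (hf : Integrable f P) :
    (fun ω => L ((P[f|m]) ω)) =ᵐ[P] P[fun ω => L (f ω)|m] := by
  refine ae_eq_condExp_of_forall_setIntegral_eq hm (L.integrable_comp hf) ?_ ?_ ?_
  · exact fun s _ _ => (L.integrable_comp integrable_condExp).integrableOn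
  · intro s hs hμs
    rw [L.integral_comp_comm integrable_condExp.integrableOn,
      setIntegral_condExp hm hf hs, L.integral_comp_comm hf.integrableOn]
  · exact StronglyMeasurable.aestronglyMeasurable (L.continuous.comp_stronglyMeasurable (stronglyMeasurable_condExp (m := m)))

/-- If `E[f∣m] = 0` a.s. and `X` is `m`-measurable, both square-integrable real functions,
then `X * f` is integrable with mean zero. -/
theorem scalar_zero {Ω : Type*} {m m0 : MeasurableSpace Ω} (hm : m ≤ m0)
    {P : Measure Ω} [IsProbabilityMeasure P]
    {f X : Ω → ℝ} (hf2 : MemLp f 2 P) (hX2 : MemLp X 2 P)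
    (hX_meas : StronglyMeasurable[m] X)
    (hf_cond : P[f|m] =ᵐ[P] 0) :
    Integrable (fun ω => X ω * f ω) P ∧ ∫ ω, X ω * f ω ∂P = 0 := by
  have hint : Integrable (X * f) P := by
    have h := hf2.smul (r := (1:ℝ≥0∞)) hX2 (hpqr := ⟨by simp [ENNReal.inv_two_add_inv_two]⟩)
    simpa [smul_eq_mul] using memLp_one_iff_integrable.mp h
  have hce : P[X * f|m] =ᵐ[P] X * P[f|m] :=
    condExp_mul_of_stronglyMeasurable_left hX_meas hint (hf2.integrable one_le_two)
  have hzero : P[X * f|m] =ᵐ[P] 0 := by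
    refine hce.trans ?_
    filter_upwards [hf_cond] with ω hω
    simp [Pi.mul_apply, hω]
  refine ⟨hint, ?_⟩
  calc ∫ ω, X ω * f ω ∂P = ∫ ω, (P[X * f|m]) ω ∂P := (integral_condExp hm (f := X * f)).symm
    _ = 0 := by rw [integral_congr_ae hzero]; simp

/-- Vector version: if `E[f∣m] = 0` a.s. and `X` is `m`-measurable, both square-integrable,
then `⟪f, X⟫` is integrable with mean zero. -/
theorem inner_eps_zero {Ω : Type*} {m m0 : MeasurableSpace Ω} (hm : m ≤ m0)
    {P : Measure Ω} [IsProbabilityMeasure P] {n : ℕ}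
    {f X : Ω → EuclideanSpace ℝ (Fin n)}
    (hf_int : Integrable f P) (hf_cond : P[f|m] =ᵐ[P] 0) (hf2 : MemLp f 2 P)
    (hX_meas : StronglyMeasurable[m] X) (hX2 : MemLp X 2 P) :
    Integrable (fun ω => ⟪f ω, X ω⟫) P ∧ ∫ ω, ⟪f ω, X ω⟫ ∂P = 0 := by
  have hi : ∀ i : Fin n,
      Integrable (fun ω => X ω i * f ω i) P ∧ ∫ ω, X ω i * f ω i ∂P = 0 := by
    intro i
    have hfi2 : MemLp (fun ω => f ω i) 2 P :=
      (EuclideanSpace.proj (𝕜 := ℝ) i).comp_memLp' hf2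
    have hXi2 : MemLp (fun ω => X ω i) 2 P :=
      (EuclideanSpace.proj (𝕜 := ℝ) i).comp_memLp' hX2
    have hXi_meas : StronglyMeasurable[m] (fun ω => X ω i) :=
      (EuclideanSpace.proj (𝕜 := ℝ) i).continuous.comp_stronglyMeasurable hX_meas
    have hfi_cond : P[fun ω => f ω i|m] =ᵐ[P] 0 := by
      have h := (condexp_clm_comm hm (EuclideanSpace.proj (𝕜 := ℝ) i) hf_int).symm
      refine h.trans ?_
      filter_upwards [hf_cond] with ω hω
      simp [hω]
    exact scalar_zero hm hfi2 hXi2 hXi_meas hfi_cond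
  have hrw : (fun ω => ⟪f ω, X ω⟫) = fun ω => ∑ i, X ω i * f ω i := by
    funext ω
    rw [PiLp.inner_apply]
    exact Finset.sum_congr rfl fun i _ => by simp [RCLike.inner_apply, mul_comm]
  constructor
  · rw [hrw]; exact integrable_finset_sum _ fun i _ => (hi i).1
  · rw [hrw, integral_finset_sum _ fun i _ => (hi i).1]
    exact Finset.sum_eq_zero fun i _ => (hi i).2

theorem my_integral_pair {Ω : Type*} {m0 : MeasurableSpace Ω} {P : Measure Ω}
    {f g : Ω → ℝ} (hf : Integrable f P) (hg : Integrable g P) :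
    ∫ ω, ((f ω, g ω) : ℝ × ℝ) ∂P = (∫ ω, f ω ∂P, ∫ ω, g ω ∂P) :=
  integral_pair hf hg

/-- In the partially linear network model, with `ε^Y`, `ε^T = T − E[T ∣ 𝒢]`
and `A.mulVec ∘ ε^T` square-integrable, the moment condition at the true parameters holds:
`E[⟨ε^Y, ε^T⟩] = 0`, `E[⟨ε^Y, A.mulVec ∘ ε^T⟩] = 0`, and hence
`E[ψ(θ₀, α₀, m₀, ℓ₀)] = (0, 0)` for the Neyman score `ψ`. -/
theorem moment_condition_at_truth
    {Ω : Type*} {ℱ : MeasurableSpace Ω} {P : Measure Ω} [IsProbabilityMeasure P]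
    {n : ℕ} (A : Matrix (Fin n) (Fin n) ℝ)
    (𝒢 ℋ : MeasurableSpace Ω) (h𝒢ℋ : 𝒢 ≤ ℋ) (hℋℱ : ℋ ≤ ℱ)
    (T g εY Y : Ω → EuclideanSpace ℝ (Fin n)) (θ₀ α₀ : ℝ)
    (hT_meas : StronglyMeasurable[ℋ] T) (hT_int : Integrable T P)
    (hg_meas : StronglyMeasurable[𝒢] g) (hg_int : Integrable g P)
    (hεY_int : Integrable εY P)
    (hεY_cond : P[εY|ℋ] =ᵐ[P] 0)
    (hY : Y = θ₀ • T + α₀ • (fun ω => mulVecE A (T ω)) + g + εY)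
    (hεY_sq : MemLp εY 2 P)
    (hεT_sq : MemLp (T - P[T|𝒢]) 2 P)
    (hAεT_sq : MemLp (fun ω => mulVecE A ((T - P[T|𝒢]) ω)) 2 P) :
    (∫ ω, ⟪εY ω, (T - P[T|𝒢]) ω⟫ ∂P = 0) ∧
    (∫ ω, ⟪εY ω, mulVecE A ((T - P[T|𝒢]) ω)⟫ ∂P = 0) ∧
    (∫ ω,
        ((⟪(Y - P[Y|𝒢] - θ₀ • (T - P[T|𝒢])
              - α₀ • (fun ω' => mulVecE A ((T - P[T|𝒢]) ω'))) ω, (T - P[T|𝒢]) ω⟫,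
          ⟪(Y - P[Y|𝒢] - θ₀ • (T - P[T|𝒢])
              - α₀ • (fun ω' => mulVecE A ((T - P[T|𝒢]) ω'))) ω,
            mulVecE A ((T - P[T|𝒢]) ω)⟫) : ℝ × ℝ) ∂P = (0, 0)) := by
  have hεT_meas : StronglyMeasurable[ℋ] (T - P[T|𝒢]) :=
    hT_meas.sub (stronglyMeasurable_condExp.mono h𝒢ℋ)
  have hAεT_meas : StronglyMeasurable[ℋ] (fun ω => mulVecE A ((T - P[T|𝒢]) ω)) :=
    (mulVecCLM A).continuous.comp_stronglyMeasurable hεT_meas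
  have h1 := inner_eps_zero hℋℱ hεY_int hεY_cond hεY_sq hεT_meas hεT_sq
  have h2 := inner_eps_zero hℋℱ hεY_int hεY_cond hεY_sq hAεT_meas hAεT_sq
  refine ⟨h1.2, h2.2, ?_⟩
  -- compute `P[Y|𝒢]`
  have hAT_int : Integrable (fun ω => mulVecE A (T ω)) P :=
    (mulVecCLM A).integrable_comp hT_int
  have hεY𝒢 : P[εY|𝒢] =ᵐ[P] 0 := by
    refine (condExp_condExp_of_le h𝒢ℋ hℋℱ).symm.trans ?_
    refine (condExp_congr_ae hεY_cond).trans ?_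
    rw [condExp_zero]
  have hAT𝒢 : P[fun ω => mulVecE A (T ω)|𝒢] =ᵐ[P]
      fun ω => mulVecE A ((P[T|𝒢]) ω) :=
    (condexp_clm_comm (h𝒢ℋ.trans hℋℱ) (mulVecCLM A) hT_int).symm
  have hg𝒢 : P[g|𝒢] =ᵐ[P] g :=
    Filter.EventuallyEq.of_eq
      (condExp_of_stronglyMeasurable (h𝒢ℋ.trans hℋℱ) hg_meas hg_int)
  have hY𝒢 : P[Y|𝒢] =ᵐ[P]
      θ₀ • P[T|𝒢] + α₀ • (fun ω => mulVecE A ((P[T|𝒢]) ω)) + g := by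
    rw [hY]
    refine (condExp_add ((((hT_int.smul θ₀).add (hAT_int.smul α₀))).add hg_int)
      hεY_int 𝒢).trans ?_
    have hsum : P[θ₀ • T + α₀ • (fun ω => mulVecE A (T ω)) + g|𝒢] =ᵐ[P]
        θ₀ • P[T|𝒢] + α₀ • (fun ω => mulVecE A ((P[T|𝒢]) ω)) + g := by
      refine (condExp_add ((hT_int.smul θ₀).add (hAT_int.smul α₀)) hg_int 𝒢).trans ?_
      have h12 : P[θ₀ • T + α₀ • (fun ω => mulVecE A (T ω))|𝒢] =ᵐ[P]
          θ₀ • P[T|𝒢] + α₀ • (fun ω => mulVecE A ((P[T|𝒢]) ω)) := by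
        refine (condExp_add (hT_int.smul θ₀) (hAT_int.smul α₀) 𝒢).trans ?_
        have ha : P[θ₀ • T|𝒢] =ᵐ[P] θ₀ • P[T|𝒢] := condExp_smul θ₀ T 𝒢
        have hb : P[α₀ • (fun ω => mulVecE A (T ω))|𝒢] =ᵐ[P]
            α₀ • (fun ω => mulVecE A ((P[T|𝒢]) ω)) :=
          (condExp_smul α₀ _ 𝒢).trans (hAT𝒢.fun_comp (α₀ • ·))
        filter_upwards [ha, hb] with ω hωa hωb
        simp only [Pi.add_apply, hωa, hωb]
      filter_upwards [h12, hg𝒢] with ω hω hgω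
      simp only [Pi.add_apply, hω, hgω]
    filter_upwards [hsum, hεY𝒢] with ω h1ω h2ω
    simp only [Pi.add_apply, h1ω, h2ω, Pi.zero_apply, add_zero]
  -- the residual equals `εY` a.s.
  have hR : (Y - P[Y|𝒢] - θ₀ • (T - P[T|𝒢])
      - α₀ • (fun ω' => mulVecE A ((T - P[T|𝒢]) ω'))) =ᵐ[P] εY := by
    filter_upwards [hY𝒢] with ω hω
    have hsub : mulVecE A (T ω - (P[T|𝒢]) ω)
        = mulVecE A (T ω) - mulVecE A ((P[T|𝒢]) ω) := by simp [mulVecE, Matrix.mulVec_sub]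
    simp only [Pi.sub_apply, Pi.smul_apply, Pi.add_apply]
    rw [hω]
    simp only [hY, Pi.add_apply, Pi.smul_apply, Pi.sub_apply, hsub, smul_sub]
    abel
  have hpair : (fun ω =>
      ((⟪(Y - P[Y|𝒢] - θ₀ • (T - P[T|𝒢])
            - α₀ • (fun ω' => mulVecE A ((T - P[T|𝒢]) ω'))) ω, (T - P[T|𝒢]) ω⟫,
        ⟪(Y - P[Y|𝒢] - θ₀ • (T - P[T|𝒢])
            - α₀ • (fun ω' => mulVecE A ((T - P[T|𝒢]) ω'))) ω,
          mulVecE A ((T - P[T|𝒢]) ω)⟫) : ℝ × ℝ)) =ᵐ[P]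
      fun ω => ((⟪εY ω, (T - P[T|𝒢]) ω⟫,
        ⟪εY ω, mulVecE A ((T - P[T|𝒢]) ω)⟫) : ℝ × ℝ) := by
    filter_upwards [hR] with ω hω
    rw [hω]
  have hip := my_integral_pair h1.1 h2.1
  rw [integral_congr_ae hpair, hip, h1.2, h2.2]
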